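/- Let H be a separable real Hilbert space, let C ⊆ H be compact and convex, let L > 0, let ρ : C → ℝ be convex and L-Lipschitz, let ξ_1, …, ξ_N ∈ C with y_n = ρ(ξ_n), and let ε > 0. Then there exist M ∈ ℕ and points p_1, …, p_M ∈ H with ‖p_m‖ ≤ L for every m, such that the map f : H → ℝ defined by f(x) = max_{1 ≤ m ≤ M} { ⟨p_m, x⟩ + min_{1 ≤ n ≤ N} ( y_n − ⟨p_m, ξ_n⟩ ) } is convex, L-Lipschitz on H, and satisfies max_{1 ≤ n ≤ N} | ρ(ξ_n) − f(ξ_n) | < ε. Moreover, if {ξ_n}_{n=1}^N is an ε/(4L)-net of C and the sample accuracy is ε/2 (i.e. max_n |ρ(ξ_n) − f(ξ_n)| < ε/2), then sup_{ξ ∈ C} | ρ(ξ) − f(ξ) | < ε. -/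

import Mathlib

open scoped RealInnerProductSpace

lemma exists_subgradient
    {H : Type*} [NormedAddCommGroup H] [InnerProductSpace ℝ H] [CompleteSpace H]
    (C : Set H) (hCcpt : IsCompact C) (hCconv : Convex ℝ C)
    (L : ℝ) (hL : 0 < L) (ρ : H → ℝ)
    (hρconv : ∀ x ∈ C, ∀ y ∈ C, ∀ t : ℝ, 0 ≤ t → t ≤ 1 →
      ρ (t • x + (1 - t) • y) ≤ t * ρ x + (1 - t) * ρ y)
    (hρlip : ∀ x ∈ C, ∀ y ∈ C, |ρ x - ρ y| ≤ L * ‖x - y‖)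
    (a : H) (ha : a ∈ C) :
    ∃ p : H, ‖p‖ ≤ L ∧ ∀ x ∈ C, ρ a + ⟪p, x - a⟫ ≤ ρ x := by
  haveI : Nonempty C := ⟨⟨a, ha⟩⟩
  set F : H → ℝ := fun x => ⨅ z : C, (ρ z + L * ‖x - z‖) with hF
  -- bounded below
  have bdd : ∀ x : H, BddBelow (Set.range fun z : C => ρ z + L * ‖x - z‖) := by
    intro x
    refine ⟨ρ a - L * ‖x - a‖, ?_⟩
    rintro v ⟨z, rfl⟩
    have h1 := hρlip a ha z z.2
    have h1' : ρ a - ρ z ≤ L * ‖a - (z : H)‖ := (abs_le.mp h1).2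
    have h2 : ‖(z : H) - a‖ ≤ ‖(z : H) - x‖ + ‖x - a‖ := by
      have := norm_add_le ((z : H) - x) (x - a); simpa using this
    have h3 : ‖a - (z : H)‖ = ‖(z : H) - a‖ := norm_sub_rev _ _
    have h4 : ‖(z : H) - x‖ = ‖x - (z : H)‖ := norm_sub_rev _ _
    have h5 : L * ‖(z : H) - a‖ ≤ L * (‖(z : H) - x‖ + ‖x - a‖) :=
      mul_le_mul_of_nonneg_left h2 hL.le
    simp only [Set.mem_setOf_eq, not_lt] at *
    nlinarith [hL.le]
  -- attainment
  have contρ : ContinuousOn ρ C := by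
    refine LipschitzOnWith.continuousOn (K := Real.toNNReal L) ?_
    rw [lipschitzOnWith_iff_dist_le_mul]
    intro u hu v hv
    rw [Real.dist_eq, dist_eq_norm]
    have := hρlip u hu v hv
    rw [Real.coe_toNNReal _ hL.le]
    exact this
  have attain : ∀ x : H, ∃ z ∈ C, ∀ w ∈ C,
      ρ z + L * ‖x - z‖ ≤ ρ w + L * ‖x - w‖ := by
    intro x
    have cont : ContinuousOn (fun z => ρ z + L * ‖x - z‖) C :=
      contρ.add (Continuous.continuousOn (by continuity))
    obtain ⟨z, hz, hmin⟩ := hCcpt.exists_isMinOn ⟨a, ha⟩ cont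
    exact ⟨z, hz, fun w hw => hmin hw⟩
  have Fval : ∀ x : H, ∀ z ∈ C, (∀ w ∈ C, ρ z + L * ‖x - z‖ ≤ ρ w + L * ‖x - w‖) →
      F x = ρ z + L * ‖x - z‖ := by
    intro x z hz hmin
    refine le_antisymm (ciInf_le (bdd x) ⟨z, hz⟩) (le_ciInf fun w => hmin w w.2)
  -- F = ρ on C
  have FeqC : ∀ x ∈ C, F x = ρ x := by
    intro x hx
    refine le_antisymm ?_ (le_ciInf fun z => ?_)
    · have := ciInf_le (bdd x) ⟨x, hx⟩
      simpa using this
    · have h := (abs_le.mp (hρlip x hx z z.2)).2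
      linarith
  -- F Lipschitz (one-sided form)
  have Flip : ∀ x z : H, F x ≤ F z + L * ‖x - z‖ := by
    intro x z
    have : F x - L * ‖x - z‖ ≤ F z := by
      refine le_ciInf fun w => ?_
      have h1 : F x ≤ ρ w + L * ‖x - (w : H)‖ := ciInf_le (bdd x) w
      have h2 : ‖x - (w : H)‖ ≤ ‖x - z‖ + ‖z - (w : H)‖ := by
        have := norm_add_le (x - z) (z - (w : H)); simpa using this
      nlinarith [hL.le]
    linarith
  have Fcont : Continuous F := by
    have : LipschitzWith (Real.toNNReal L) F := by
      refine LipschitzWith.of_dist_le_mul fun u v => ?_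
      rw [Real.dist_eq, dist_eq_norm, Real.coe_toNNReal _ hL.le]
      rw [abs_le]
      constructor
      · have := Flip v u; rw [norm_sub_rev]; linarith
      · have := Flip u v; linarith
    exact this.continuous
  -- F convex
  have Fconv : ∀ x z : H, ∀ t : ℝ, 0 ≤ t → t ≤ 1 →
      F (t • x + (1 - t) • z) ≤ t * F x + (1 - t) * F z := by
    intro x z t ht0 ht1
    obtain ⟨z₁, hz₁, hmin₁⟩ := attain x
    obtain ⟨z₂, hz₂, hmin₂⟩ := attain z
    have hFx : F x = ρ z₁ + L * ‖x - z₁‖ := Fval x z₁ hz₁ hmin₁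
    have hFz : F z = ρ z₂ + L * ‖z - z₂‖ := Fval z z₂ hz₂ hmin₂
    have hmem : t • z₁ + (1 - t) • z₂ ∈ C := hCconv hz₁ hz₂ ht0 (by linarith) (by ring)
    have hle : F (t • x + (1 - t) • z) ≤
        ρ (t • z₁ + (1 - t) • z₂) + L * ‖(t • x + (1 - t) • z) - (t • z₁ + (1 - t) • z₂)‖ :=
      ciInf_le (bdd _) ⟨_, hmem⟩
    have hρ : ρ (t • z₁ + (1 - t) • z₂) ≤ t * ρ z₁ + (1 - t) * ρ z₂ :=
      hρconv z₁ hz₁ z₂ hz₂ t ht0 ht1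
    have hnorm : ‖(t • x + (1 - t) • z) - (t • z₁ + (1 - t) • z₂)‖ ≤
        t * ‖x - z₁‖ + (1 - t) * ‖z - z₂‖ := by
      have heq : (t • x + (1 - t) • z) - (t • z₁ + (1 - t) • z₂)
          = t • (x - z₁) + (1 - t) • (z - z₂) := by
        module
      rw [heq]
      calc ‖t • (x - z₁) + (1 - t) • (z - z₂)‖
          ≤ ‖t • (x - z₁)‖ + ‖(1 - t) • (z - z₂)‖ := norm_add_le _ _
        _ = t * ‖x - z₁‖ + (1 - t) * ‖z - z₂‖ := by
            rw [norm_smul, norm_smul, Real.norm_eq_abs, Real.norm_eq_abs,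
              abs_of_nonneg ht0, abs_of_nonneg (by linarith)]
    have : L * ‖(t • x + (1 - t) • z) - (t • z₁ + (1 - t) • z₂)‖ ≤
        L * (t * ‖x - z₁‖ + (1 - t) * ‖z - z₂‖) :=
      mul_le_mul_of_nonneg_left hnorm hL.le
    rw [hFx, hFz]; nlinarith
  -- separation
  set S : Set (H × ℝ) := {q : H × ℝ | F q.1 < q.2} with hS
  have Sopen : IsOpen S := isOpen_lt (Fcont.comp continuous_fst) continuous_snd
  have Sconv : Convex ℝ S := by
    intro q1 hq1 q2 hq2 s t hs ht hst
    simp only [hS, Set.mem_setOf_eq] at *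
    have hsm : (s • q1 + t • q2).1 = s • q1.1 + t • q2.1 := rfl
    have hsm2 : (s • q1 + t • q2).2 = s * q1.2 + t * q2.2 := rfl
    rw [hsm, hsm2]
    have ht' : t = 1 - s := by linarith
    subst ht'
    have h1 := Fconv q1.1 q2.1 s hs (by linarith)
    rcases eq_or_lt_of_le hs with h | h
    · simp only [← h] at *
      simpa using hq2
    · have h2 : s * F q1.1 < s * q1.2 := by exact (mul_lt_mul_iff_right₀ h).mpr hq1
      have h3 : (1 - s) * F q2.1 ≤ (1 - s) * q2.2 :=
        mul_le_mul_of_nonneg_left hq2.le (by linarith)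
      linarith
  have hnotmem : ((a, F a) : H × ℝ) ∉ S := by simp [hS]
  obtain ⟨g, hg⟩ := geometric_hahn_banach_point_open Sconv Sopen hnotmem
  set s := g ((0 : H), (1 : ℝ)) with hs
  have gsplit : ∀ (x : H) (u : ℝ), g (x, u) = g (x, 0) + u * s := by
    intro x u
    have : ((x, u) : H × ℝ) = (x, (0 : ℝ)) + u • ((0 : H), (1 : ℝ)) := by
      simp [Prod.ext_iff]
    rw [this, map_add, map_smul, smul_eq_mul]
  have spos : 0 < s := by
    have hmem : ((a, F a + 1) : H × ℝ) ∈ S := by simp [hS]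
    have h2 := hg _ hmem
    rw [gsplit a (F a + 1), gsplit a (F a)] at h2
    linarith
  have key : ∀ x : H, g (a, 0) + F a * s ≤ g (x, 0) + F x * s := by
    intro x
    by_contra hcon
    push_neg at hcon
    set δ := (g (a, 0) + F a * s - (g (x, 0) + F x * s)) / s with hδ
    have hδpos : 0 < δ := div_pos (by linarith) spos
    have hmem : ((x, F x + δ) : H × ℝ) ∈ S := by simp [hS, hδpos]
    have h2 := hg _ hmem
    rw [gsplit x (F x + δ), gsplit a (F a)] at h2
    have : δ * s = g (a, 0) + F a * s - (g (x, 0) + F x * s) := by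
      rw [hδ, div_mul_cancel₀ _ spos.ne']
    nlinarith
  -- build p
  set φ : StrongDual ℝ H := (-s⁻¹) • (g.comp (ContinuousLinearMap.inl ℝ H ℝ)) with hφ
  set p : H := (InnerProductSpace.toDual ℝ H).symm φ with hp
  have hinner : ∀ x : H, ⟪p, x⟫ = -s⁻¹ * g (x, 0) := by
    intro x
    rw [hp, InnerProductSpace.toDual_symm_apply]
    simp [hφ]
  have hsub : ∀ x : H, F a + ⟪p, x - a⟫ ≤ F x := by
    intro x
    have h1 : ⟪p, x - a⟫ = ⟪p, x⟫ - ⟪p, a⟫ := inner_sub_right _ _ _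
    rw [h1, hinner, hinner]
    have hk := key x
    have : -s⁻¹ * g (x, 0) - -s⁻¹ * g (a, 0) = (g (a, 0) - g (x, 0)) / s := by
      field_simp; ring
    rw [this]
    have hd : (g (a, 0) - g (x, 0)) / s ≤ F x - F a := by
      rw [div_le_iff₀ spos]; nlinarith
    linarith
  refine ⟨p, ?_, ?_⟩
  · have h := hsub (a + p)
    have h2 : F (a + p) ≤ F a + L * ‖p‖ := by
      have := Flip (a + p) a; simpa using this
    have h3 : ⟪p, (a + p) - a⟫ = ‖p‖ ^ 2 := by
      simp [real_inner_self_eq_norm_sq]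
    rw [h3] at h
    rcases eq_or_lt_of_le (norm_nonneg p) with h0 | h0
    · rw [← h0]; exact hL.le
    · nlinarith
  · intro x hx
    have := hsub x
    rw [FeqC a ha, FeqC x hx] at this
    exact this

/-- finite-sample neural reconstruction.  Given samples of a
convex `L`-Lipschitz functional on a compact convex set, there is a finite
max-min formula, convex and `L`-Lipschitz on `H`, matching the samples to
accuracy `ε`; moreover if the samples form an `ε/(4L)`-net of `C` and the
sample accuracy is `ε/2`, then the approximation is uniformly `ε`-accurate on
`C`. -/
theorem finite_sample_reconstruction
    {H : Type*} [NormedAddCommGroup H] [InnerProductSpace ℝ H] [CompleteSpace H]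
    [TopologicalSpace.SeparableSpace H]
    (C : Set H) (hCcpt : IsCompact C) (hCconv : Convex ℝ C)
    (L : ℝ) (hL : 0 < L) (ρ : H → ℝ)
    (hρconv : ∀ x ∈ C, ∀ y ∈ C, ∀ t : ℝ, 0 ≤ t → t ≤ 1 →
      ρ (t • x + (1 - t) • y) ≤ t * ρ x + (1 - t) * ρ y)
    (hρlip : ∀ x ∈ C, ∀ y ∈ C, |ρ x - ρ y| ≤ L * ‖x - y‖)
    (N : ℕ) (hN : 1 ≤ N) (ξ : Fin N → H) (hξ : ∀ n, ξ n ∈ C)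
    (y : Fin N → ℝ) (hy : ∀ n, y n = ρ (ξ n))
    (ε : ℝ) (hε : 0 < ε) :
    ∃ (M : ℕ) (p : Fin M → H) (f : H → ℝ),
      0 < M ∧
      (∀ m, ‖p m‖ ≤ L) ∧
      (∀ x, f x = ⨆ m : Fin M,
        (⟪p m, x⟫ + ⨅ n : Fin N, (y n - ⟪p m, ξ n⟫))) ∧
      (∀ x z : H, ∀ t : ℝ, 0 ≤ t → t ≤ 1 →
        f (t • x + (1 - t) • z) ≤ t * f x + (1 - t) * f z) ∧
      (∀ x z : H, |f x - f z| ≤ L * ‖x - z‖) ∧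
      (∀ n, |ρ (ξ n) - f (ξ n)| < ε) ∧
      ((∀ x ∈ C, ∃ n, ‖x - ξ n‖ ≤ ε / (4 * L)) →
        (∀ n, |ρ (ξ n) - f (ξ n)| < ε / 2) →
        ∀ x ∈ C, |ρ x - f x| < ε) := by
  haveI : Nonempty (Fin N) := ⟨⟨0, hN⟩⟩
  choose p hpnorm hpsub using fun k : Fin N =>
    exists_subgradient C hCcpt hCconv L hL ρ hρconv hρlip (ξ k) (hξ k)
  set c : Fin N → ℝ := fun m => ⨅ n : Fin N, (y n - ⟪p m, ξ n⟫) with hc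
  set f : H → ℝ := fun x => ⨆ m : Fin N, (⟪p m, x⟫ + c m) with hf
  have bddA : ∀ (g : Fin N → ℝ), BddAbove (Set.range g) :=
    fun g => (Set.finite_range g).bddAbove
  have bddB : ∀ (g : Fin N → ℝ), BddBelow (Set.range g) :=
    fun g => (Set.finite_range g).bddBelow
  -- the term bound: each affine piece at x is ≤ f x
  have hterm_le : ∀ (m : Fin N) (x : H), ⟪p m, x⟫ + c m ≤ f x :=
    fun m x => le_ciSup (bddA fun m' => ⟪p m', x⟫ + c m') m
  -- one-sided Lipschitz
  have flip1 : ∀ x z : H, f x ≤ f z + L * ‖x - z‖ := by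
    intro x z
    refine ciSup_le fun m => ?_
    have h1 : ⟪p m, x⟫ = ⟪p m, z⟫ + ⟪p m, x - z⟫ := by
      rw [inner_sub_right]; ring
    have h2 : ⟪p m, x - z⟫ ≤ ‖p m‖ * ‖x - z‖ := real_inner_le_norm _ _
    have h3 : ‖p m‖ * ‖x - z‖ ≤ L * ‖x - z‖ :=
      mul_le_mul_of_nonneg_right (hpnorm m) (norm_nonneg _)
    have h4 := hterm_le m z
    linarith
  -- exact interpolation
  have hinterp : ∀ k : Fin N, f (ξ k) = y k := by
    intro k
    refine le_antisymm (ciSup_le fun m => ?_) ?_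
    · have h1 : c m ≤ y k - ⟪p m, ξ k⟫ := ciInf_le (bddB _) k
      linarith
    · have h1 : y k - ⟪p k, ξ k⟫ ≤ c k := by
        refine le_ciInf fun n => ?_
        have h2 := hpsub k (ξ n) (hξ n)
        rw [inner_sub_right] at h2
        rw [hy k, hy n]
        linarith
      have := hterm_le k (ξ k)
      linarith
  refine ⟨N, p, f, hN, hpnorm, fun x => rfl, ?_, ?_, ?_, ?_⟩
  · -- convexity
    intro x z t ht0 ht1
    refine ciSup_le fun m => ?_
    have h1 : ⟪p m, t • x + (1 - t) • z⟫ + c m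
        = t * (⟪p m, x⟫ + c m) + (1 - t) * (⟪p m, z⟫ + c m) := by
      rw [inner_add_right, real_inner_smul_right, real_inner_smul_right]; ring
    rw [h1]
    have h2 : t * (⟪p m, x⟫ + c m) ≤ t * f x :=
      mul_le_mul_of_nonneg_left (hterm_le m x) ht0
    have h3 : (1 - t) * (⟪p m, z⟫ + c m) ≤ (1 - t) * f z :=
      mul_le_mul_of_nonneg_left (hterm_le m z) (by linarith)
    linarith
  · -- Lipschitz
    intro x z
    rw [abs_le]
    constructor
    · have := flip1 z x; rw [norm_sub_rev]; linarith
    · have := flip1 x z; linarith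
  · -- samples
    intro n
    rw [hinterp n, hy n]
    simpa using hε
  · -- net argument
    intro hnet hacc x hx
    obtain ⟨n, hn⟩ := hnet x hx
    have h1 : |ρ x - ρ (ξ n)| ≤ L * ‖x - ξ n‖ := hρlip x hx (ξ n) (hξ n)
    have h2 : |f (ξ n) - f x| ≤ L * ‖ξ n - x‖ := by
      rw [abs_le]
      constructor
      · have := flip1 x (ξ n); rw [norm_sub_rev]; linarith
      · have := flip1 (ξ n) x; linarith
    have h3 := hacc n
    have h4 : L * ‖x - ξ n‖ ≤ L * (ε / (4 * L)) := mul_le_mul_of_nonneg_left hn hL.le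
    have h5 : L * (ε / (4 * L)) = ε / 4 := by field_simp
    have h6 : ‖ξ n - x‖ = ‖x - ξ n‖ := norm_sub_rev _ _
    have htri : |ρ x - f x| ≤ |ρ x - ρ (ξ n)| + |ρ (ξ n) - f (ξ n)| + |f (ξ n) - f x| := by
      calc |ρ x - f x| = |(ρ x - ρ (ξ n)) + ((ρ (ξ n) - f (ξ n)) + (f (ξ n) - f x))| := by
            ring_nf
        _ ≤ |ρ x - ρ (ξ n)| + |(ρ (ξ n) - f (ξ n)) + (f (ξ n) - f x)| := abs_add_le _ _
        _ ≤ |ρ x - ρ (ξ n)| + (|ρ (ξ n) - f (ξ n)| + |f (ξ n) - f x|) := by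
            have := abs_add_le (ρ (ξ n) - f (ξ n)) (f (ξ n) - f x); linarith
        _ = |ρ x - ρ (ξ n)| + |ρ (ξ n) - f (ξ n)| + |f (ξ n) - f x| := by ring
    rw [h6] at h2
    linarith
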